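/- arXiv:1110.3880 — 2 statements merged into one kernel-verified Lean document; each statement's English description precedes it below -/
import Mathlib

section
/- Let p₂ : E₂ → B be a Hurewicz fibration and E₁ ⊆ E₂ a subspace such that p₁ = p₂|_{E₁} : E₁ → B is a Hurewicz fibration and E₁ is a strong deformation retract of E₂ via a fiber-preserving retraction (i.e., there is H : E₂ × I → E₂ with H₀ = id, H(e,1) ∈ E₁, p₂(H(e,t)) = p₂(e) for all e, t, and H(e,t) = e for e ∈ E₁). Then the map q : Z → B × I, where Z = {(e, t) ∈ E₂ × I : t > 0, or (t = 0 and e ∈ E₁)} and q(e,t) = (p₂(e), t), is a Hurewicz fibration. -/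
open unitInterval Set

universe u v w

/-- A map `p : E → B` is a Hurewicz fibration if it is continuous and has the
homotopy lifting property with respect to every topological space. -/
def IsHurewiczFibration {E : Type u} {B : Type v} [TopologicalSpace E] [TopologicalSpace B]
    (p : E → B) : Prop :=
  Continuous p ∧
  ∀ (X : Type w) (_ : TopologicalSpace X) (h : C(X, E)) (H : C(X × I, B)),
    (∀ x, H (x, 0) = p (h x)) →
    ∃ L : C(X × I, E), (∀ x, L (x, 0) = h x) ∧ ∀ z, p (L z) = H z

/-- Let `p₂ : E₂ → B` be a Hurewicz fibration and `E₁ ⊆ E₂` a subspace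
such that `p₂|_{E₁}` is a Hurewicz fibration and `E₁` is a strong deformation retract of
`E₂` via a fiber preserving retraction `H`.  Then
`q : Z → B × I`, `q (e, t) = (p₂ e, t)`, where
`Z = {(e,t) ∈ E₂ × I : t > 0, or t = 0 and e ∈ E₁}`, is a Hurewicz fibration. -/
theorem isHurewiczFibration_of_strongFiberDeformationRetract
    {E₂ : Type u} {B : Type v} [TopologicalSpace E₂] [TopologicalSpace B]
    (p₂ : E₂ → B) (hp₂ : IsHurewiczFibration.{u, v, u} p₂)
    (E₁ : Set E₂)
    (hp₁ : IsHurewiczFibration.{u, v, u} (fun e : E₁ => p₂ e))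
    (H : C(E₂ × I, E₂))
    (hH0 : ∀ e, H (e, 0) = e)
    (hH1 : ∀ e, H (e, 1) ∈ E₁)
    (hHfib : ∀ e t, p₂ (H (e, t)) = p₂ e)
    (hHrel : ∀ e ∈ E₁, ∀ t, H (e, t) = e) :
    IsHurewiczFibration.{u, v, u}
      (fun z : { z : E₂ × I // 0 < z.2 ∨ (z.2 = 0 ∧ z.1 ∈ E₁) } =>
        ((p₂ z.1.1, z.1.2) : B × I)) := by
  classical
  obtain ⟨hp₂c, hp₂l⟩ := hp₂
  refine ⟨(hp₂c.comp (continuous_fst.comp continuous_subtype_val)).prodMk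
      (continuous_snd.comp continuous_subtype_val), ?_⟩
  intro X _ h G hG0
  have hGB0 : ∀ x, (G (x, 0)).1 = p₂ ((h x : { z : E₂ × I // _} )).1.1 :=
    fun x => congrArg Prod.fst (hG0 x)
  have hGI0 : ∀ x, (G (x, 0)).2 = ((h x : { z : E₂ × I // _} )).1.2 :=
    fun x => congrArg Prod.snd (hG0 x)
  obtain ⟨L', hL'0, hL'p⟩ := hp₂l X _
    ⟨fun x => (h x).1.1, continuous_fst.comp (continuous_subtype_val.comp h.continuous)⟩
    ⟨fun z => (G z).1, continuous_fst.comp G.continuous⟩ hGB0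
  simp only [ContinuousMap.coe_mk] at hL'0 hL'p
  -- the reparametrisation
  set φr : X × I → ℝ := fun z =>
    if (z.2 : ℝ) = 0 then 0 else 1 - min 1 (((G z).2 : ℝ) / (z.2 : ℝ)) with hφr
  set φ : X × I → I := fun z => Set.projIcc 0 1 zero_le_one (φr z) with hφdef
  set ℓ : X × I → E₂ := fun z => H (L' z, φ z) with hℓdef
  have hφ0 : ∀ x : X, φ (x, 0) = 0 := by
    intro x
    have h1 : φr (x, 0) = 0 := by simp [hφr]
    rw [hφdef]
    simp only [h1]
    exact Subtype.ext (by norm_num [Set.projIcc])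
  have hℓ0 : ∀ x : X, ℓ (x, 0) = (h x).1.1 := by
    intro x
    rw [hℓdef]
    simp only [hφ0 x, hL'0 x, hH0]
  have hℓp : ∀ z, p₂ (ℓ z) = (G z).1 := fun z => (hHfib _ _).trans (hL'p z)
  have hℓmem : ∀ z, (G z).2 = 0 → ℓ z ∈ E₁ := by
    intro z hz
    by_cases hs : (z.2 : ℝ) = 0
    · have hz2 : z.2 = 0 := Subtype.ext hs
      have hzeq : z = (z.1, 0) := by rw [← hz2]
      rw [hzeq, hℓ0 z.1]
      have ht : (h z.1).1.2 = 0 := by rw [← hGI0 z.1, ← hzeq, hz]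
      rcases (h z.1).2 with hpos | ⟨_, hmem⟩
      · exact absurd (ht ▸ hpos) (lt_irrefl 0)
      · exact hmem
    · have h1 : φr z = 1 := by
        rw [hφr]
        simp only [if_neg hs, hz]
        norm_num
      have hφ1 : φ z = 1 := by
        rw [hφdef]
        simp only [h1]
        exact Subtype.ext (by norm_num [Set.projIcc])
      rw [hℓdef]
      simp only [hφ1]
      exact hH1 _
  -- continuity of ℓ
  have hℓcont : Continuous ℓ := by
    rw [continuous_iff_continuousAt]
    intro z
    by_cases hbad : (z.2 : ℝ) = 0 ∧ ((G z).2 : ℝ) = 0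
    · -- the delicate points: use the tube lemma
      obtain ⟨hs0, ht0⟩ := hbad
      have hz2 : z.2 = 0 := Subtype.ext hs0
      have hzeq : z = (z.1, 0) := by rw [← hz2]
      have hL'z : L' z = (h z.1).1.1 := by rw [hzeq, hL'0]
      have heE1 : L' z ∈ E₁ := by
        rw [hL'z]
        have ht : (h z.1).1.2 = 0 := by
          rw [← hGI0 z.1, ← hzeq]; exact Subtype.ext ht0
        rcases (h z.1).2 with hpos | ⟨_, hmem⟩
        · exact absurd (ht ▸ hpos) (lt_irrefl 0)
        · exact hmem
      have hval : ∀ τ : I, H (L' z, τ) = L' z := fun τ => hHrel _ heE1 τ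
      have key : Filter.Tendsto ℓ (nhds z) (nhds (L' z)) := by
        rw [Filter.tendsto_def]
        intro V hV
        obtain ⟨W, hWV, hWopen, hWmem⟩ := mem_nhds_iff.mp hV
        obtain ⟨u, v, hu, -, hau, hIv, huv⟩ :=
          generalized_tube_lemma isCompact_singleton (isCompact_univ (X := I))
            (H.continuous.isOpen_preimage W hWopen)
            (by
              rintro ⟨e', τ⟩ ⟨he', -⟩
              simp only [Set.mem_singleton_iff] at he'
              show H (e', τ) ∈ W
              rw [he', hval τ]
              exact hWmem)
        have hmemu : ∀ᶠ z' in nhds z, L' z' ∈ u := by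
          have : Filter.Tendsto L' (nhds z) (nhds (L' z)) := L'.continuous.continuousAt
          exact this (hu.mem_nhds (hau rfl))
        filter_upwards [hmemu] with z' hz'
        exact hWV (huv ⟨hz', hIv (Set.mem_univ _)⟩)
      have hℓz : ℓ z = L' z := hval (φ z)
      rw [ContinuousAt, hℓz]
      exact key
    · -- here φ is continuous at z
      have hφAt : ContinuousAt φ z := by
        apply continuous_projIcc.continuousAt.comp
        by_cases hs : (z.2 : ℝ) = 0
        · -- then (G z).2 ≠ 0, and φr is locally 0
          have htpos : 0 < ((G z).2 : ℝ) := by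
            rcases lt_or_eq_of_le ((G z).2.2.1) with h' | h'
            · exact h'
            · exact absurd ⟨hs, h'.symm⟩ hbad
          set c : ℝ := ((G z).2 : ℝ) with hc
          have hVopen : IsOpen {z' : X × I | c / 2 < ((G z').2 : ℝ) ∧ (z'.2 : ℝ) < c / 2} := by
            apply IsOpen.inter
            · exact isOpen_lt continuous_const
                (continuous_subtype_val.comp (continuous_snd.comp G.continuous))
            · exact isOpen_lt (continuous_subtype_val.comp continuous_snd) continuous_const
          have hVmem : z ∈ {z' : X × I | c / 2 < ((G z').2 : ℝ) ∧ (z'.2 : ℝ) < c / 2} := by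
            constructor
            · exact half_lt_self htpos
            · rw [hs]; exact half_pos htpos
          have hev : ∀ᶠ z' in nhds z, φr z' = φr z := by
            filter_upwards [hVopen.mem_nhds hVmem] with z' hz'
            have hz0 : φr z = 0 := by rw [hφr]; simp [hs]
            rw [hz0, hφr]
            by_cases hs' : (z'.2 : ℝ) = 0
            · simp [hs']
            · simp only [if_neg hs']
              have hpos' : 0 < (z'.2 : ℝ) := lt_of_le_of_ne z'.2.2.1 (Ne.symm hs')
              have hge : (1 : ℝ) ≤ ((G z').2 : ℝ) / (z'.2 : ℝ) :=
                (one_le_div hpos').mpr (le_of_lt (lt_trans hz'.2 hz'.1))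
              rw [min_eq_left hge]
              ring
          exact Filter.EventuallyEq.continuousAt hev
        · -- s ≠ 0: φr agrees with a continuous function near z
          have hg : ContinuousAt (fun z' : X × I => 1 - min 1 (((G z').2 : ℝ) / (z'.2 : ℝ))) z := by
            have h1 : Continuous fun z' : X × I => ((G z').2 : ℝ) :=
              continuous_subtype_val.comp (continuous_snd.comp G.continuous)
            have h2 : Continuous fun z' : X × I => (z'.2 : ℝ) :=
              continuous_subtype_val.comp continuous_snd
            exact continuousAt_const.sub
              (continuousAt_const.min (h1.continuousAt.div h2.continuousAt hs))
          have hOopen : IsOpen {z' : X × I | (z'.2 : ℝ) ≠ 0} := by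
            have : {z' : X × I | (z'.2 : ℝ) ≠ 0} =
                (fun z' : X × I => (z'.2 : ℝ)) ⁻¹' {(0 : ℝ)}ᶜ := rfl
            rw [this]
            exact (isOpen_compl_singleton).preimage (continuous_subtype_val.comp continuous_snd)
          have hev : ∀ᶠ z' in nhds z,
              (fun z' : X × I => 1 - min 1 (((G z').2 : ℝ) / (z'.2 : ℝ))) z' = φr z' := by
            filter_upwards [hOopen.mem_nhds hs] with z' hz'
            rw [hφr]
            exact (if_neg hz').symm
          exact hg.congr hev
      exact H.continuous.continuousAt.comp (L'.continuous.continuousAt.prodMk hφAt)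
  -- membership in Z
  have hmem : ∀ z, (0 : I) < (G z).2 ∨ ((G z).2 = 0 ∧ ℓ z ∈ E₁) := by
    intro z
    by_cases h0 : (G z).2 = 0
    · exact Or.inr ⟨h0, hℓmem z h0⟩
    · left
      have : (0 : ℝ) < ((G z).2 : ℝ) :=
        lt_of_le_of_ne (G z).2.2.1 (fun hc => h0 (Subtype.ext hc.symm))
      exact this
  refine ⟨⟨fun z => ⟨(ℓ z, (G z).2), hmem z⟩,
      (hℓcont.prodMk (continuous_snd.comp G.continuous)).subtype_mk _⟩, ?_, ?_⟩
  · intro x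
    apply Subtype.ext
    exact Prod.ext (hℓ0 x) (hGI0 x)
  · intro z
    exact Prod.ext (hℓp z) rfl
end

section
/- Let p : E → B be a G-fibration with B^H path-connected for every isotropy subgroup H of B. Then for any isotropy subgroups H, K of B with H^a ≤ K for some a ∈ G, and any points b ∈ B^K, b' ∈ B^H, the fiber p^{-1}(b) — regarded as an H-space via h·e = (a^{-1}ha)e after translating by a — is H-homotopy equivalent to the H-space p^{-1}(b'). In particular, the family {p^{-1}(b_H)}_{H}, with b_H ∈ B^H chosen arbitrarily, is a compatible family. -/
open unitInterval Set

universe u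

/-- A `G`-space: a topological space with a `G`-action by homeomorphisms. -/
structure GSpace (G : Type u) [Group G] : Type (u + 1) where
  carrier : Type u
  [topology : TopologicalSpace carrier]
  [action : MulAction G carrier]
  continuous_smul : ∀ g : G, Continuous fun x : carrier => g • x

attribute [instance] GSpace.topology GSpace.action

variable {G : Type u} [Group G]

/-- An equivariant map of `G`-spaces. -/
def IsGMap {X Y : GSpace G} (f : X.carrier → Y.carrier) : Prop :=
  ∀ (g : G) (x : X.carrier), f (g • x) = g • f x

/-- A `G`-fibration: a continuous `G`-map with the `G`-homotopy lifting property
with respect to every `G`-space. -/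
def IsGFibration {E B : GSpace G} (p : E.carrier → B.carrier) : Prop :=
  Continuous p ∧ IsGMap (X := E) (Y := B) p ∧
  ∀ (X : GSpace G) (h : C(X.carrier, E.carrier)) (H : C(X.carrier × I, B.carrier)),
    IsGMap (X := X) (Y := E) h →
    (∀ (g : G) (x : X.carrier) (t : I), H (g • x, t) = g • H (x, t)) →
    (∀ x, H (x, 0) = p (h x)) →
    ∃ L : C(X.carrier × I, E.carrier),
      (∀ x, L (x, 0) = h x) ∧ (∀ z, p (L z) = H z) ∧
      (∀ (g : G) (x : X.carrier) (t : I), L (g • x, t) = g • L (x, t))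

/-- Two `G`-maps are `G`-homotopic if there is a homotopy between them which is
equivariant at each time. -/
def GHomotopic {Γ : Type u} [Group Γ] {X Y : GSpace Γ} (f₀ f₁ : C(X.carrier, Y.carrier)) : Prop :=
  ∃ K : C(X.carrier × I, Y.carrier),
    (∀ x, K (x, 0) = f₀ x) ∧ (∀ x, K (x, 1) = f₁ x) ∧
    (∀ (a : Γ) (x : X.carrier) (t : I), K (a • x, t) = a • K (x, t))

/-- `Γ`-homotopy equivalence of `Γ`-spaces. -/
def GHtpyEquiv {Γ : Type u} [Group Γ] (X Y : GSpace Γ) : Prop :=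
  ∃ (f : C(X.carrier, Y.carrier)) (g : C(Y.carrier, X.carrier)),
    IsGMap (X := X) (Y := Y) f ∧ IsGMap (X := Y) (Y := X) g ∧
    GHomotopic (X := X) (Y := X) (g.comp f) (ContinuousMap.id _) ∧
    GHomotopic (X := Y) (Y := Y) (f.comp g) (ContinuousMap.id _)

/-- Underlying space of the fiber `p⁻¹(b)`. -/
def FiberCarrier (E B : GSpace G) (p : E.carrier → B.carrier) (b : B.carrier) : Type u :=
  { e : E.carrier // p e = b }

instance (E B : GSpace G) (p : E.carrier → B.carrier) (b : B.carrier) :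
    TopologicalSpace (FiberCarrier E B p b) :=
  inferInstanceAs (TopologicalSpace { e : E.carrier // p e = b })

/-- The conjugated `H`-action `h • e = (a⁻¹ h a) • e` on the fiber `p⁻¹(b)`. -/
def conjSmul (E B : GSpace G) (p : E.carrier → B.carrier)
    (hp : IsGMap (X := E) (Y := B) p) (H K : Subgroup G) (a : G)
    (ha : ∀ h ∈ H, a⁻¹ * h * a ∈ K) (b : B.carrier) (hb : ∀ k ∈ K, k • b = b)
    (h : ↥H) (e : FiberCarrier E B p b) : FiberCarrier E B p b :=
  ⟨(a⁻¹ * ↑h * a) • e.1, by rw [hp, e.2, hb _ (ha ↑h h.2)]⟩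

/-- The fiber `p⁻¹(b)` over a point `b` fixed by the subgroup `K`, regarded as an
`H`-space via the conjugated action `h • e = (a⁻¹ h a) • e`, where `H^a ≤ K`.
(Taking `a = 1` and `K = H` gives the usual `H`-action on a fiber over `B^H`.) -/
def conjFiberGSpace (E B : GSpace G) (p : E.carrier → B.carrier)
    (hp : IsGMap (X := E) (Y := B) p) (H K : Subgroup G) (a : G)
    (ha : ∀ h ∈ H, a⁻¹ * h * a ∈ K) (b : B.carrier) (hb : ∀ k ∈ K, k • b = b) :
    GSpace ↥H where
  carrier := FiberCarrier E B p b
  action :=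
    { smul := conjSmul E B p hp H K a ha b hb
      one_smul := fun e => Subtype.ext (by
        show (a⁻¹ * ↑(1 : ↥H) * a) • e.1 = e.1
        simp)
      mul_smul := fun h₁ h₂ e => Subtype.ext (by
        show (a⁻¹ * ↑(h₁ * h₂) * a) • e.1 = (a⁻¹ * ↑h₁ * a) • (a⁻¹ * ↑h₂ * a) • e.1
        rw [← mul_smul]
        congr 1
        push_cast
        group) }
  continuous_smul h := Continuous.subtype_mk
    ((E.continuous_smul _).comp continuous_subtype_val) _


/-! ### Auxiliary material -/

lemma continuous_of_discrete_prod {α X Y : Type*} [TopologicalSpace α] [DiscreteTopology α]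
    [TopologicalSpace X] [TopologicalSpace Y] (f : α × X → Y)
    (hf : ∀ a, Continuous fun x => f (a, x)) : Continuous f := by
  rw [continuous_def]
  intro V hV
  have h : f ⁻¹' V = ⋃ a, {a} ×ˢ ((fun x => f (a, x)) ⁻¹' V) := by
    ext ⟨a, x⟩
    simp
  rw [h]
  exact isOpen_iUnion fun a => (isOpen_discrete _).prod (hV.preimage (hf a))

/-- The setoid defining the induced `G`-space `G ×_H X` for an `H`-space `X`. -/
def indSetoid (H : Subgroup G) (X : GSpace ↥H) : Setoid (G × X.carrier) where
  r a b := ∃ h : ↥H, b.1 = a.1 * h ∧ a.2 = h • b.2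
  iseqv := by
    refine ⟨fun a => ⟨1, by simp⟩, ?_, ?_⟩
    · rintro ⟨g1, x1⟩ ⟨g2, x2⟩ ⟨h, h1, h2⟩
      simp only at h1 h2
      refine ⟨h⁻¹, ?_, ?_⟩
      · simp only [h1, Subgroup.coe_inv, mul_inv_cancel_right]
      · simp [h2]
    · rintro ⟨g1, x1⟩ ⟨g2, x2⟩ ⟨g3, x3⟩ ⟨h, h1, h2⟩ ⟨h', h1', h2'⟩
      simp only at h1 h2 h1' h2'
      refine ⟨h * h', ?_, ?_⟩
      · rw [h1', h1, Submonoid.coe_mul, mul_assoc]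
      · rw [h2, h2', mul_smul]

/-- The induced `G`-space `G ×_H X` (with `G` discrete). -/
def indGSpace [TopologicalSpace G] [DiscreteTopology G] (H : Subgroup G) (X : GSpace ↥H) :
    GSpace G where
  carrier := Quotient (indSetoid H X)
  action :=
    { smul := fun g => Quotient.map' (fun a => (g * a.1, a.2)) (by
        rintro ⟨g1, x1⟩ ⟨g2, x2⟩ ⟨h, h1, h2⟩
        simp only at h1 h2
        exact ⟨h, by simp [h1, mul_assoc], h2⟩)
      one_smul := fun q => Quotient.inductionOn q fun a => by
        show Quotient.map' _ _ (Quotient.mk _ a) = Quotient.mk _ a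
        simp
      mul_smul := fun g g' q => Quotient.inductionOn q fun a => by
        show Quotient.map' _ _ (Quotient.mk _ a)
            = Quotient.map' _ _ (Quotient.map' _ _ (Quotient.mk _ a))
        simp [Quotient.map'_mk'', mul_assoc] }
  continuous_smul g := Continuous.quotient_map'
    ((continuous_const.mul continuous_fst).prodMk continuous_snd) _

/-- The `H`-homotopy lifting property of a `G`-fibration, for a subgroup `H ≤ G`,
obtained via the induced `G`-space `G ×_H X`. -/
lemma hlp_subgroup (E B : GSpace G) (p : E.carrier → B.carrier)
    (hp : IsGFibration (E := E) (B := B) p) (H : Subgroup G) (X : GSpace ↥H)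
    (h : C(X.carrier, E.carrier)) (Φ : C(X.carrier × I, B.carrier))
    (hh : ∀ (τ : ↥H) x, h (τ • x) = (τ : G) • h x)
    (hΦ : ∀ (τ : ↥H) x t, Φ (τ • x, t) = (τ : G) • Φ (x, t))
    (h0 : ∀ x, Φ (x, 0) = p (h x)) :
    ∃ L : C(X.carrier × I, E.carrier),
      (∀ x, L (x, 0) = h x) ∧ (∀ z, p (L z) = Φ z) ∧
      (∀ (τ : ↥H) x t, L (τ • x, t) = (τ : G) • L (x, t)) := by
  classical
  letI : TopologicalSpace G := ⊥
  haveI : DiscreteTopology G := ⟨rfl⟩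
  set Q : GSpace G := indGSpace H X with hQ
  set q : G × X.carrier → Q.carrier := Quotient.mk (indSetoid H X) with hq
  have hqc : Continuous q := continuous_quot_mk
  -- `q` is an open map
  have hqo : IsOpenMap q := by
    intro U hU
    have hpre : q ⁻¹' (q '' U) =
        ⋃ τ : ↥H, (fun a : G × X.carrier => (a.1 * (τ : G)⁻¹, τ • a.2)) ⁻¹' U := by
      ext ⟨g, x⟩
      simp only [Set.mem_preimage, Set.mem_image, Set.mem_iUnion]
      constructor
      · rintro ⟨⟨g', x'⟩, hU', he⟩
        obtain ⟨τ, h1, h2⟩ := Quotient.exact he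
        simp only at h1 h2
        refine ⟨τ, ?_⟩
        simpa [h1, h2] using hU'
      · rintro ⟨τ, hmem⟩
        refine ⟨(g * (τ : G)⁻¹, τ • x), hmem, Quotient.sound ?_⟩
        exact ⟨τ, by simp, rfl⟩
    have : IsOpen (q ⁻¹' (q '' U)) := by
      rw [hpre]
      refine isOpen_iUnion fun τ => hU.preimage ?_
      exact (continuous_fst.mul continuous_const).prodMk
        ((X.continuous_smul τ).comp continuous_snd)
    exact this
  have hqsurj : Function.Surjective q := Quotient.exists_rep
  have hQM : Topology.IsQuotientMap (Prod.map q (id : I → I)) :=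
    (hqo.prodMap IsOpenMap.id).isQuotientMap (hqc.prodMap continuous_id)
      (hqsurj.prodMap Function.surjective_id)
  -- the induced initial lift
  have hwd : ∀ (a b : G × X.carrier), (indSetoid H X).r a b → a.1 • h a.2 = b.1 • h b.2 := by
    rintro ⟨g1, x1⟩ ⟨g2, x2⟩ ⟨τ, h1, h2⟩
    simp only at h1 h2 ⊢
    rw [h2, hh, h1, mul_smul]
  have hwd' : ∀ (t : I) (a b : G × X.carrier), (indSetoid H X).r a b →
      a.1 • Φ (a.2, t) = b.1 • Φ (b.2, t) := by
    rintro t ⟨g1, x1⟩ ⟨g2, x2⟩ ⟨τ, h1, h2⟩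
    simp only at h1 h2 ⊢
    rw [h2, hΦ, h1, mul_smul]
  set hbar : Q.carrier → E.carrier := Quotient.lift (fun a : G × X.carrier => a.1 • h a.2)
    (fun a b hab => hwd a b hab) with hhbar
  have hbarc : Continuous hbar := by
    refine Continuous.quotient_lift ?_ _
    exact continuous_of_discrete_prod _ fun g => (E.continuous_smul g).comp h.continuous
  set Φbar : Q.carrier × I → B.carrier :=
    fun z => Quotient.lift (fun a : G × X.carrier => a.1 • Φ (a.2, z.2))
      (fun a b hab => hwd' z.2 a b hab) z.1 with hΦbar
  have hΦbarc : Continuous Φbar := by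
    rw [hQM.continuous_iff]
    have : (Φbar ∘ Prod.map q (id : I → I)) =
        (fun w : G × (X.carrier × I) => w.1 • Φ w.2) ∘
          (fun z : (G × X.carrier) × I => (z.1.1, (z.1.2, z.2))) := rfl
    rw [this]
    refine Continuous.comp ?_ ?_
    · exact continuous_of_discrete_prod _ fun g => (B.continuous_smul g).comp Φ.continuous
    · exact (continuous_fst.fst).prodMk ((continuous_fst.snd).prodMk continuous_snd)
  -- equivariance data for the `G`-fibration
  have hsmul : ∀ (g : G) (a : G × X.carrier), g • q a = q (g * a.1, a.2) := fun g a => rfl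
  have hbar_eq : IsGMap (X := Q) (Y := E) hbar := by
    intro g z
    refine Quotient.inductionOn z fun a => ?_
    rw [hsmul]
    show (g * a.1) • h a.2 = g • (a.1 • h a.2)
    rw [mul_smul]
  have hΦbar_eq : ∀ (g : G) (z : Q.carrier) (t : I),
      Φbar (g • z, t) = g • Φbar (z, t) := by
    intro g z t
    refine Quotient.inductionOn z fun a => ?_
    rw [hsmul]
    show (g * a.1) • Φ (a.2, t) = g • (a.1 • Φ (a.2, t))
    rw [mul_smul]
  have hbar0 : ∀ z, Φbar (z, 0) = p (hbar z) := by
    intro z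
    refine Quotient.inductionOn z fun a => ?_
    show a.1 • Φ (a.2, 0) = p (a.1 • h a.2)
    rw [h0, hp.2.1]
  obtain ⟨Lbar, hL0, hLp, hLeq⟩ := hp.2.2 Q ⟨hbar, hbarc⟩ ⟨Φbar, hΦbarc⟩ hbar_eq hΦbar_eq hbar0
  refine ⟨⟨fun z => Lbar (q (1, z.1), z.2), ?_⟩, ?_, ?_, ?_⟩
  · exact Lbar.continuous.comp ((hqc.comp
      (continuous_const.prodMk continuous_fst)).prodMk continuous_snd)
  · intro x
    show Lbar (q (1, x), 0) = h x
    rw [hL0]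
    show (1 : G) • h x = h x
    rw [one_smul]
  · intro z
    show p (Lbar (q (1, z.1), z.2)) = Φ z
    rw [hLp]
    show (1 : G) • Φ (z.1, z.2) = Φ z
    rw [one_smul]
  · intro τ x t
    show Lbar (q (1, τ • x), t) = (τ : G) • Lbar (q (1, x), t)
    have : q (1, τ • x) = (τ : G) • q (1, x) := by
      rw [hsmul]
      exact Quotient.sound ⟨τ, by simp, rfl⟩
    rw [this, hLeq]

/-- Product of a `Γ`-space with the interval (trivial action on `I`). -/
def prodIGSpace {Γ : Type u} [Group Γ] (X : GSpace Γ) : GSpace Γ where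
  carrier := X.carrier × I
  action :=
    { smul := fun a z => (a • z.1, z.2)
      one_smul := fun z => by
        show ((1 : Γ) • z.1, z.2) = z
        rw [one_smul]
      mul_smul := fun a b z => by
        show ((a * b) • z.1, z.2) = (a • b • z.1, z.2)
        rw [mul_smul] }
  continuous_smul a := ((X.continuous_smul a).comp continuous_fst).prodMk continuous_snd

lemma conj1_smul_val (E B : GSpace G) (p : E.carrier → B.carrier)
    (hp : IsGMap (X := E) (Y := B) p) (H : Subgroup G)
    (ha : ∀ h ∈ H, 1⁻¹ * h * 1 ∈ H) (b : B.carrier) (hb : ∀ k ∈ H, k • b = b)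
    (τ : ↥H) (e : (conjFiberGSpace E B p hp H H 1 ha b hb).carrier) :
    (τ • e).1 = (τ : G) • e.1 := by
  show ((1 : G)⁻¹ * ↑τ * 1) • e.1 = (τ : G) • e.1
  rw [inv_one, one_mul, mul_one]

lemma homotopy_trans_equivariant {X Y : Type*} [TopologicalSpace X] [TopologicalSpace Y]
    {f₀ f₁ f₂ : C(X, Y)} (A : ContinuousMap.Homotopy f₀ f₁) (Bh : ContinuousMap.Homotopy f₁ f₂)
    {eX : X → X} {sY : Y → Y}
    (hA : ∀ (t : I) (x : X), A (t, eX x) = sY (A (t, x)))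
    (hB : ∀ (t : I) (x : X), Bh (t, eX x) = sY (Bh (t, x))) :
    ∀ (t : I) (x : X), (A.trans Bh) (t, eX x) = sY ((A.trans Bh) (t, x)) := by
  intro t x
  rw [ContinuousMap.Homotopy.trans_apply, ContinuousMap.Homotopy.trans_apply]
  dsimp only
  split_ifs with hc
  · exact hA _ x
  · exact hB _ x

lemma loopParam_mem (t s : I) : (1 - (s : ℝ)) * (1 - |2 * (t : ℝ) - 1|) ∈ I := by
  have h1 : |2 * (t : ℝ) - 1| ≤ 1 := abs_le.2 ⟨by linarith [t.2.1], by linarith [t.2.2]⟩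
  have h0 : (0 : ℝ) ≤ |2 * (t : ℝ) - 1| := abs_nonneg _
  constructor
  · exact mul_nonneg (by linarith [s.2.2]) (by linarith)
  · calc (1 - (s : ℝ)) * (1 - |2 * (t : ℝ) - 1|) ≤ 1 * 1 :=
        mul_le_mul (by linarith [s.2.1]) (by linarith) (by linarith) (by norm_num)
    _ = 1 := by norm_num

/-- The parameter of the standard null-homotopy of the loop `ω.trans ω.symm`. -/
def loopParam (t s : I) : I := ⟨(1 - (s : ℝ)) * (1 - |2 * (t : ℝ) - 1|), loopParam_mem t s⟩

lemma loopParam_continuous : Continuous fun z : I × I => loopParam z.1 z.2 := by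
  apply Continuous.subtype_mk
  fun_prop

lemma loopParam_zero_left (s : I) : loopParam 0 s = 0 := by
  apply Subtype.ext
  show (1 - (s : ℝ)) * (1 - |2 * ((0 : I) : ℝ) - 1|) = 0
  norm_num

lemma loopParam_one_left (s : I) : loopParam 1 s = 0 := by
  apply Subtype.ext
  show (1 - (s : ℝ)) * (1 - |2 * ((1 : I) : ℝ) - 1|) = 0
  norm_num

lemma loopParam_one_right (t : I) : loopParam t 1 = 0 := by
  apply Subtype.ext
  show (1 - ((1 : I) : ℝ)) * (1 - |2 * (t : ℝ) - 1|) = 0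
  norm_num

set_option maxHeartbeats 2000000 in
/-- The key homotopy: transporting a fiber along a path and back is
`H`-homotopic to the identity. -/
lemma key_homotopy (E B : GSpace G) (p : E.carrier → B.carrier)
    (hp : IsGFibration (E := E) (B := B) p) (H : Subgroup G)
    (ha : ∀ h ∈ H, 1⁻¹ * h * 1 ∈ H)
    (c₁ c₂ : B.carrier) (hc₁ : ∀ h ∈ H, h • c₁ = c₁) (hc₂ : ∀ h ∈ H, h • c₂ = c₂)
    (ω : Path c₁ c₂) (hω : ∀ (t : I), ∀ h ∈ H, h • ω t = ω t)
    (L : C((conjFiberGSpace E B p hp.2.1 H H 1 ha c₁ hc₁).carrier × I, E.carrier))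
    (hL0 : ∀ e, L (e, 0) = e.1)
    (hLp : ∀ e t, p (L (e, t)) = ω t)
    (hLeq : ∀ (τ : ↥H) e t, L (τ • e, t) = (τ : G) • L (e, t))
    (L' : C((conjFiberGSpace E B p hp.2.1 H H 1 ha c₂ hc₂).carrier × I, E.carrier))
    (hL'0 : ∀ e, L' (e, 0) = e.1)
    (hL'p : ∀ e t, p (L' (e, t)) = ω (unitInterval.symm t))
    (hL'eq : ∀ (τ : ↥H) e t, L' (τ • e, t) = (τ : G) • L' (e, t))
    (f : C((conjFiberGSpace E B p hp.2.1 H H 1 ha c₁ hc₁).carrier,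
      (conjFiberGSpace E B p hp.2.1 H H 1 ha c₂ hc₂).carrier))
    (g : C((conjFiberGSpace E B p hp.2.1 H H 1 ha c₂ hc₂).carrier,
      (conjFiberGSpace E B p hp.2.1 H H 1 ha c₁ hc₁).carrier))
    (hfv : ∀ e, (f e).1 = L (e, 1)) (hgv : ∀ e, (g e).1 = L' (e, 1)) :
    GHomotopic (X := conjFiberGSpace E B p hp.2.1 H H 1 ha c₁ hc₁)
      (Y := conjFiberGSpace E B p hp.2.1 H H 1 ha c₁ hc₁)
      (g.comp f) (ContinuousMap.id _) := by
  classical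
  have hfeq : ∀ (τ : ↥H) (e : (conjFiberGSpace E B p hp.2.1 H H 1 ha c₁ hc₁).carrier), f (τ • e) = τ • f e := by
    intro τ e
    apply Subtype.ext
    rw [conj1_smul_val E B p hp.2.1 H ha c₂ hc₂, hfv, hfv, hLeq]
  -- the concatenated lift over the loop `ω` followed by its reverse
  set ι₁ : C((conjFiberGSpace E B p hp.2.1 H H 1 ha c₁ hc₁).carrier, E.carrier) := ⟨fun e => e.1, continuous_subtype_val⟩ with hι₁
  set fval : C((conjFiberGSpace E B p hp.2.1 H H 1 ha c₁ hc₁).carrier, E.carrier) :=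
    ⟨fun e => L (e, 1), L.continuous.comp (continuous_id.prodMk continuous_const)⟩ with hfval
  set gfval : C((conjFiberGSpace E B p hp.2.1 H H 1 ha c₁ hc₁).carrier, E.carrier) :=
    ⟨fun e => L' (f e, 1), L'.continuous.comp (f.continuous.prodMk continuous_const)⟩ with hgfval
  set A : ContinuousMap.Homotopy ι₁ fval :=
    { toFun := fun z => L (z.2, z.1)
      continuous_toFun := L.continuous.comp (continuous_snd.prodMk continuous_fst)
      map_zero_left := fun e => hL0 e
      map_one_left := fun e => rfl } with hA
  set Bh : ContinuousMap.Homotopy fval gfval :=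
    { toFun := fun z => L' (f z.2, z.1)
      continuous_toFun := L'.continuous.comp
        ((f.continuous.comp continuous_snd).prodMk continuous_fst)
      map_zero_left := fun e => by
        show L' (f e, 0) = L (e, 1)
        rw [hL'0, hfv]
      map_one_left := fun e => rfl } with hBh
  set M := A.trans Bh with hM
  have hMp : ∀ (t : I) (e : (conjFiberGSpace E B p hp.2.1 H H 1 ha c₁ hc₁).carrier), p (M (t, e)) = ω (loopParam t 0) := by
    intro t e
    rw [hM, ContinuousMap.Homotopy.trans_apply]
    dsimp only
    split_ifs with hc
    · show p (L (e, _)) = _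
      rw [hLp]
      congr 1
      apply Subtype.ext
      show 2 * (t : ℝ) = (1 - ((0 : I) : ℝ)) * (1 - |2 * (t : ℝ) - 1|)
      rw [abs_of_nonpos (by linarith)]
      norm_num
    · show p (L' (f e, _)) = _
      rw [hL'p]
      congr 1
      apply Subtype.ext
      show 1 - (2 * (t : ℝ) - 1) = (1 - ((0 : I) : ℝ)) * (1 - |2 * (t : ℝ) - 1|)
      rw [abs_of_nonneg (by push_neg at hc; linarith)]
      norm_num
  have hMeq : ∀ (τ : ↥H) (t : I) (e : (conjFiberGSpace E B p hp.2.1 H H 1 ha c₁ hc₁).carrier), M (t, τ • e) = (τ : G) • M (t, e) := by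
    intro τ
    refine homotopy_trans_equivariant A Bh (sY := fun y => (τ : G) • y) ?_ ?_
    · intro t e
      exact hLeq τ e t
    · intro t e
      show L' (f (τ • e), t) = (τ : G) • L' (f e, t)
      rw [hfeq, hL'eq]
  -- lift the null-homotopy of the loop
  set XI := prodIGSpace (conjFiberGSpace E B p hp.2.1 H H 1 ha c₁ hc₁) with hXI
  set hmap : C(XI.carrier, E.carrier) :=
    ⟨fun z => M (z.2, z.1), M.continuous.comp (continuous_snd.prodMk continuous_fst)⟩ with hhmap
  set Φsq : C(XI.carrier × I, B.carrier) :=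
    ⟨fun z => ω (loopParam z.1.2 z.2),
      ω.continuous.comp (loopParam_continuous.comp
        ((continuous_fst.snd).prodMk continuous_snd))⟩ with hΦsq
  obtain ⟨R, hR0, hRp, hReq⟩ := hlp_subgroup E B p hp H XI hmap Φsq
    (fun τ z => hMeq τ z.2 z.1)
    (fun τ z t => (hω (loopParam z.2 t) ↑τ τ.2).symm)
    (fun z => (hMp z.2 z.1).symm)
  have hRp' : ∀ (e : (conjFiberGSpace E B p hp.2.1 H H 1 ha c₁ hc₁).carrier) (t s : I), p (R ((e, t), s)) = ω (loopParam t s) :=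
    fun e t s => hRp ((e, t), s)
  -- the three vertical homotopies
  set m₁ : C((conjFiberGSpace E B p hp.2.1 H H 1 ha c₁ hc₁).carrier, (conjFiberGSpace E B p hp.2.1 H H 1 ha c₁ hc₁).carrier) :=
    ⟨fun e => ⟨R ((e, 1), 1), by rw [hRp', loopParam_one_left]; exact ω.source⟩,
      Continuous.subtype_mk (R.continuous.comp
        ((continuous_id.prodMk continuous_const).prodMk continuous_const))
        (fun e => by show p (R ((e, 1), 1)) = c₁; rw [hRp', loopParam_one_left]; exact ω.source)⟩ with hm₁
  set m₂ : C((conjFiberGSpace E B p hp.2.1 H H 1 ha c₁ hc₁).carrier, (conjFiberGSpace E B p hp.2.1 H H 1 ha c₁ hc₁).carrier) :=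
    ⟨fun e => ⟨R ((e, 0), 1), by rw [hRp', loopParam_zero_left]; exact ω.source⟩,
      Continuous.subtype_mk (R.continuous.comp
        ((continuous_id.prodMk continuous_const).prodMk continuous_const))
        (fun e => by show p (R ((e, 0), 1)) = c₁; rw [hRp', loopParam_zero_left]; exact ω.source)⟩ with hm₂
  set Ka : ContinuousMap.Homotopy (g.comp f) m₁ :=
    { toFun := fun z => ⟨R ((z.2, 1), z.1), by rw [hRp', loopParam_one_left]; exact ω.source⟩
      continuous_toFun := Continuous.subtype_mk (R.continuous.comp
        ((continuous_snd.prodMk continuous_const).prodMk continuous_fst))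
        (fun z => by show p (R ((z.2, 1), z.1)) = c₁; rw [hRp', loopParam_one_left]; exact ω.source)
      map_zero_left := fun e => Subtype.ext (by
        show R ((e, 1), 0) = ((g.comp f) e).1
        rw [hR0 (e, 1)]
        show M (1, e) = (g (f e)).1
        rw [M.apply_one]
        show L' (f e, 1) = (g (f e)).1
        rw [hgv])
      map_one_left := fun e => Subtype.ext rfl } with hKa
  set Kb : ContinuousMap.Homotopy m₁ m₂ :=
    { toFun := fun z => ⟨R ((z.2, unitInterval.symm z.1), 1),
        by rw [hRp', loopParam_one_right]; exact ω.source⟩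
      continuous_toFun := Continuous.subtype_mk (R.continuous.comp
        ((continuous_snd.prodMk (unitInterval.continuous_symm.comp continuous_fst)).prodMk
          continuous_const))
        (fun z => by show p (R ((z.2, unitInterval.symm z.1), 1)) = c₁; rw [hRp', loopParam_one_right]; exact ω.source)
      map_zero_left := fun e => Subtype.ext (by
        show R ((e, unitInterval.symm 0), 1) = (m₁ e).1
        rw [unitInterval.symm_zero]
        rfl)
      map_one_left := fun e => Subtype.ext (by
        show R ((e, unitInterval.symm 1), 1) = (m₂ e).1
        rw [unitInterval.symm_one]
        rfl) } with hKb
  set Kc : ContinuousMap.Homotopy m₂ (ContinuousMap.id (conjFiberGSpace E B p hp.2.1 H H 1 ha c₁ hc₁).carrier) :=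
    { toFun := fun z => ⟨R ((z.2, 0), unitInterval.symm z.1),
        by rw [hRp', loopParam_zero_left]; exact ω.source⟩
      continuous_toFun := Continuous.subtype_mk (R.continuous.comp
        ((continuous_snd.prodMk continuous_const).prodMk
          (unitInterval.continuous_symm.comp continuous_fst)))
        (fun z => by show p (R ((z.2, 0), unitInterval.symm z.1)) = c₁; rw [hRp', loopParam_zero_left]; exact ω.source)
      map_zero_left := fun e => Subtype.ext (by
        show R ((e, 0), unitInterval.symm 0) = (m₂ e).1
        rw [unitInterval.symm_zero]
        rfl)
      map_one_left := fun e => Subtype.ext (by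
        show R ((e, 0), unitInterval.symm 1) = e.1
        rw [unitInterval.symm_one, hR0 (e, 0)]
        show M (0, e) = e.1
        rw [M.apply_zero]
        rfl) } with hKc
  have hKaeq : ∀ (τ : ↥H) (t : I) (e : (conjFiberGSpace E B p hp.2.1 H H 1 ha c₁ hc₁).carrier), Ka (t, τ • e) = τ • Ka (t, e) := by
    intro τ t e
    apply Subtype.ext
    rw [conj1_smul_val E B p hp.2.1 H ha c₁ hc₁]
    exact hReq τ (e, 1) t
  have hKbeq : ∀ (τ : ↥H) (t : I) (e : (conjFiberGSpace E B p hp.2.1 H H 1 ha c₁ hc₁).carrier), Kb (t, τ • e) = τ • Kb (t, e) := by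
    intro τ t e
    apply Subtype.ext
    rw [conj1_smul_val E B p hp.2.1 H ha c₁ hc₁]
    exact hReq τ (e, unitInterval.symm t) 1
  have hKceq : ∀ (τ : ↥H) (t : I) (e : (conjFiberGSpace E B p hp.2.1 H H 1 ha c₁ hc₁).carrier), Kc (t, τ • e) = τ • Kc (t, e) := by
    intro τ t e
    apply Subtype.ext
    rw [conj1_smul_val E B p hp.2.1 H ha c₁ hc₁]
    exact hReq τ (e, 0) (unitInterval.symm t)
  set Full := (Ka.trans Kb).trans Kc with hFull
  have hFulleq : ∀ (τ : ↥H) (t : I) (e : (conjFiberGSpace E B p hp.2.1 H H 1 ha c₁ hc₁).carrier), Full (t, τ • e) = τ • Full (t, e) := by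
    intro τ
    exact homotopy_trans_equivariant _ _
      (homotopy_trans_equivariant _ _ (hKaeq τ) (hKbeq τ)) (hKceq τ)
  refine ⟨⟨fun z => Full (z.2, z.1),
    Full.continuous.comp (continuous_snd.prodMk continuous_fst)⟩, ?_, ?_, ?_⟩
  · intro x
    exact Full.apply_zero x
  · intro x
    exact Full.apply_one x
  · intro τ x t
    exact hFulleq τ t x

set_option maxHeartbeats 1000000 in
/-- The fibers over the two endpoints of a path in `B^H` are `H`-homotopy
equivalent. -/
lemma fiber_equiv_along_path (E B : GSpace G) (p : E.carrier → B.carrier)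
    (hp : IsGFibration (E := E) (B := B) p) (H : Subgroup G)
    (ha : ∀ h ∈ H, 1⁻¹ * h * 1 ∈ H)
    (b₁ b₂ : B.carrier) (hb₁ : ∀ h ∈ H, h • b₁ = b₁) (hb₂ : ∀ h ∈ H, h • b₂ = b₂)
    (ω : Path b₁ b₂) (hω : ∀ (t : I), ∀ h ∈ H, h • ω t = ω t) :
    GHtpyEquiv (conjFiberGSpace E B p hp.2.1 H H 1 ha b₁ hb₁)
      (conjFiberGSpace E B p hp.2.1 H H 1 ha b₂ hb₂) := by
  classical
  obtain ⟨L, hL0, hLp, hLeq⟩ := hlp_subgroup E B p hp H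
    (conjFiberGSpace E B p hp.2.1 H H 1 ha b₁ hb₁)
    ⟨fun e => e.1, continuous_subtype_val⟩
    ⟨fun z => ω z.2, ω.continuous.comp continuous_snd⟩
    (fun τ e => conj1_smul_val E B p hp.2.1 H ha b₁ hb₁ τ e)
    (fun τ e t => (hω t ↑τ τ.2).symm)
    (fun e => by show ω 0 = p e.1; rw [ω.source]; exact e.2.symm)
  obtain ⟨L', hL'0, hL'p, hL'eq⟩ := hlp_subgroup E B p hp H
    (conjFiberGSpace E B p hp.2.1 H H 1 ha b₂ hb₂)
    ⟨fun e => e.1, continuous_subtype_val⟩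
    ⟨fun z => ω (unitInterval.symm z.2),
      ω.continuous.comp (unitInterval.continuous_symm.comp continuous_snd)⟩
    (fun τ e => conj1_smul_val E B p hp.2.1 H ha b₂ hb₂ τ e)
    (fun τ e t => (hω _ ↑τ τ.2).symm)
    (fun e => by
      show ω (unitInterval.symm 0) = p e.1
      rw [unitInterval.symm_zero, ω.target]
      exact e.2.symm)
  set f : C((conjFiberGSpace E B p hp.2.1 H H 1 ha b₁ hb₁).carrier,
      (conjFiberGSpace E B p hp.2.1 H H 1 ha b₂ hb₂).carrier) :=
    ⟨fun e => ⟨L (e, 1), by show p (L (e, 1)) = b₂; rw [hLp (e, 1)]; exact ω.target⟩,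
      Continuous.subtype_mk (L.continuous.comp (continuous_id.prodMk continuous_const))
        (fun e => by show p (L (e, 1)) = b₂; rw [hLp (e, 1)]; exact ω.target)⟩ with hf
  set g : C((conjFiberGSpace E B p hp.2.1 H H 1 ha b₂ hb₂).carrier,
      (conjFiberGSpace E B p hp.2.1 H H 1 ha b₁ hb₁).carrier) :=
    ⟨fun e => ⟨L' (e, 1), by
        show p (L' (e, 1)) = b₁
        rw [hL'p (e, 1)]
        show ω (unitInterval.symm 1) = b₁
        rw [unitInterval.symm_one]
        exact ω.source⟩,
      Continuous.subtype_mk (L'.continuous.comp (continuous_id.prodMk continuous_const))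
        (fun e => by
          show p (L' (e, 1)) = b₁
          rw [hL'p (e, 1)]
          show ω (unitInterval.symm 1) = b₁
          rw [unitInterval.symm_one]
          exact ω.source)⟩ with hg
  have hfeq : IsGMap (X := conjFiberGSpace E B p hp.2.1 H H 1 ha b₁ hb₁)
      (Y := conjFiberGSpace E B p hp.2.1 H H 1 ha b₂ hb₂) f := by
    intro τ e
    apply Subtype.ext
    rw [conj1_smul_val E B p hp.2.1 H ha b₂ hb₂]
    show L (τ • e, 1) = (τ : G) • L (e, 1)
    exact hLeq τ e 1
  have hgeq : IsGMap (X := conjFiberGSpace E B p hp.2.1 H H 1 ha b₂ hb₂)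
      (Y := conjFiberGSpace E B p hp.2.1 H H 1 ha b₁ hb₁) g := by
    intro τ e
    apply Subtype.ext
    rw [conj1_smul_val E B p hp.2.1 H ha b₁ hb₁]
    show L' (τ • e, 1) = (τ : G) • L' (e, 1)
    exact hL'eq τ e 1
  refine ⟨f, g, hfeq, hgeq, ?_, ?_⟩
  · exact key_homotopy E B p hp H ha b₁ b₂ hb₁ hb₂ ω hω
      L hL0 (fun e t => hLp (e, t)) hLeq
      L' hL'0 (fun e t => hL'p (e, t)) hL'eq
      f g (fun e => rfl) (fun e => rfl)
  · refine key_homotopy E B p hp H ha b₂ b₁ hb₂ hb₁ ω.symm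
      (fun t h hh => hω _ h hh)
      L' hL'0 (fun e t => hL'p (e, t)) hL'eq
      L hL0 (fun e t => by
        rw [hLp (e, t)]
        show ω t = ω.symm (unitInterval.symm t)
        rw [Path.symm_apply]
        simp) hLeq
      g f (fun e => rfl) (fun e => rfl)

/-- Conjugating a `Γ`-homotopy equivalence by an equivariant homeomorphism. -/
lemma ghtpyEquiv_of_conj {Γ : Type u} [Group Γ] {Z X Y : GSpace Γ}
    (T : C(Z.carrier, X.carrier)) (T' : C(X.carrier, Z.carrier))
    (hT : IsGMap (X := Z) (Y := X) T) (hT' : IsGMap (X := X) (Y := Z) T')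
    (h1 : ∀ z, T' (T z) = z) (h2 : ∀ x, T (T' x) = x)
    (hXY : GHtpyEquiv X Y) : GHtpyEquiv Z Y := by
  obtain ⟨f, g, hf, hg, ⟨K₁, hK₁0, hK₁1, hK₁e⟩, ⟨K₂, hK₂0, hK₂1, hK₂e⟩⟩ := hXY
  refine ⟨f.comp T, T'.comp g, ?_, ?_, ?_, ?_⟩
  · intro a z
    show f (T (a • z)) = a • f (T z)
    rw [hT, hf]
  · intro a y
    show T' (g (a • y)) = a • T' (g y)
    rw [hg, hT']
  · refine ⟨⟨fun z => T' (K₁ (T z.1, z.2)),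
      T'.continuous.comp (K₁.continuous.comp
        ((T.continuous.comp continuous_fst).prodMk continuous_snd))⟩, ?_, ?_, ?_⟩
    · intro z
      show T' (K₁ (T z, 0)) = _
      rw [hK₁0]
      rfl
    · intro z
      show T' (K₁ (T z, 1)) = _
      rw [hK₁1]
      exact h1 z
    · intro a z t
      show T' (K₁ (T (a • z), t)) = a • T' (K₁ (T z, t))
      rw [hT, hK₁e, hT']
  · refine ⟨K₂, ?_, hK₂1, hK₂e⟩
    intro y
    show K₂ (y, 0) = ((f.comp T).comp (T'.comp g)) y
    rw [hK₂0]
    show f (g y) = f (T (T' (g y)))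
    rw [h2]
/-- Let `p : E → B` be a `G`-fibration of a finite group `G` with
`B^H` path-connected for every isotropy subgroup `H` of `B`.  Then for isotropy
subgroups `H, K` with `H^a ≤ K` and points `b ∈ B^K`, `b' ∈ B^H`, the fiber
`p⁻¹(b)` with the conjugated `H`-action is `H`-homotopy equivalent to the fiber
`p⁻¹(b')` with its natural `H`-action.  (In particular, choosing base points in each
`B^H` yields a compatible family of fibers.) -/
theorem conjFiber_gHtpyEquiv_fiber [Finite G] (E B : GSpace G)
    (p : E.carrier → B.carrier) (hp : IsGFibration (E := E) (B := B) p)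
    (hconn : ∀ H : Subgroup G, (∃ x : B.carrier, MulAction.stabilizer G x = H) →
      IsPathConnected { b : B.carrier | ∀ h ∈ H, h • b = b })
    (H K : Subgroup G)
    (hH : ∃ x : B.carrier, MulAction.stabilizer G x = H)
    (hK : ∃ x : B.carrier, MulAction.stabilizer G x = K)
    (a : G) (ha : ∀ h ∈ H, a⁻¹ * h * a ∈ K)
    (b : B.carrier) (hb : ∀ k ∈ K, k • b = b)
    (b' : B.carrier) (hb' : ∀ h ∈ H, h • b' = b') :
    GHtpyEquiv (conjFiberGSpace E B p hp.2.1 H K a ha b hb)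
      (conjFiberGSpace E B p hp.2.1 H H 1 (fun h hh => by simpa using hh) b' hb') := by
  classical
  have hab : ∀ h ∈ H, h • (a • b) = a • b := by
    intro h hh
    have hfix : (a⁻¹ * h * a) • b = b := hb _ (ha h hh)
    calc h • (a • b) = (h * a) • b := (mul_smul _ _ _).symm
    _ = (a * (a⁻¹ * h * a)) • b := by congr 1; group
    _ = a • ((a⁻¹ * h * a) • b) := mul_smul _ _ _
    _ = a • b := by rw [hfix]
  obtain ⟨ω, hω⟩ := (hconn H hH).joinedIn _ hab _ hb'
  have Emid := fiber_equiv_along_path E B p hp H (fun h hh => by simpa using hh)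
    (a • b) b' hab hb' ω (fun t => hω t)
  refine ghtpyEquiv_of_conj (Y := conjFiberGSpace E B p hp.2.1 H H 1
      (fun h hh => by simpa using hh) b' hb')
    (⟨fun e => ⟨a • e.1, by rw [hp.2.1, e.2]⟩,
      Continuous.subtype_mk ((E.continuous_smul a).comp continuous_subtype_val)
        (fun e => by show p (a • e.1) = a • b; rw [hp.2.1, e.2])⟩ :
      C((conjFiberGSpace E B p hp.2.1 H K a ha b hb).carrier,
        (conjFiberGSpace E B p hp.2.1 H H 1 (fun h hh => by simpa using hh)
          (a • b) hab).carrier))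
    (⟨fun x => ⟨a⁻¹ • x.1, by rw [hp.2.1, x.2]; exact inv_smul_smul a b⟩,
      Continuous.subtype_mk ((E.continuous_smul a⁻¹).comp continuous_subtype_val)
        (fun x => by show p (a⁻¹ • x.1) = b; rw [hp.2.1, x.2]; exact inv_smul_smul a b)⟩)
    ?_ ?_ ?_ ?_ Emid
  · intro τ e
    apply Subtype.ext
    rw [conj1_smul_val E B p hp.2.1 H (fun h hh => by simpa using hh) (a • b) hab]
    show a • ((a⁻¹ * ↑τ * a) • e.1) = (τ : G) • (a • e.1)
    rw [smul_smul, smul_smul]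
    congr 1
    group
  · intro τ x
    apply Subtype.ext
    show a⁻¹ • (((1 : G)⁻¹ * ↑τ * 1) • x.1) = (a⁻¹ * ↑τ * a) • (a⁻¹ • x.1)
    rw [smul_smul, smul_smul]
    congr 1
    group
  · intro e
    exact Subtype.ext (inv_smul_smul a e.1)
  · intro x
    exact Subtype.ext (smul_inv_smul a x.1)
end
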